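/- Let X ⊆ ℝ^d and suppose C : ℝ^K ⇉ X is a continuous compact-valued correspondence, X and M ⊆ ℝ^K are compact, and for every x ∈ X the set ¬x = {λ ∈ M : x ∉ C(λ)} is nonempty. Assume additionally that for every μ ∈ M there exists x ∈ C(μ) with μ ∉ cl(¬x). Then there exists ρ > 0 such that for all x ∈ X, the set ¬B_ρ(x) = {λ ∈ M : ∀ x' with ‖x' − x‖_∞ ≤ ρ, x' ∉ C(λ)} is nonempty. -/
import Mathlib


/-- Extended alternative sets are nonempty: under continuity and compactness assumptions
there exists `ρ > 0` such that `¬B_ρ(x) ≠ ∅` for all `x ∈ X`. -/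
theorem extended_alternatives_nonempty {d K : ℕ}
    (X : Set (Fin d → ℝ)) (M : Set (Fin K → ℝ))
    (hX : IsCompact X) (hM : IsCompact M)
    (C : (Fin K → ℝ) → Set (Fin d → ℝ))
    (hCsub : ∀ lam, C lam ⊆ X)
    (hCcomp : ∀ lam, IsCompact (C lam))
    (hCne : ∀ lam ∈ M, (C lam).Nonempty)
    (huhc : ∀ lam, ∀ V : Set (Fin d → ℝ), IsOpen V → C lam ⊆ V →
      ∃ U ∈ nhds lam, ∀ lam' ∈ U, C lam' ⊆ V)
    (hlhc : ∀ lam, ∀ V : Set (Fin d → ℝ), IsOpen V → (C lam ∩ V).Nonempty →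
      ∃ U ∈ nhds lam, ∀ lam' ∈ U, (C lam' ∩ V).Nonempty)
    (hnot : ∀ x ∈ X, ({lam ∈ M | x ∉ C lam}).Nonempty)
    (hid : ∀ μ ∈ M, ∃ x ∈ C μ, μ ∉ closure {lam ∈ M | x ∉ C lam}) :
    ∃ ρ > (0:ℝ), ∀ x ∈ X,
      ({lam ∈ M | ∀ x' ∈ X, dist x' x ≤ ρ → x' ∉ C lam}).Nonempty := by
  classical
  rcases X.eq_empty_or_nonempty with hXe | hXne
  · exact ⟨1, one_pos, fun x hx => absurd hx (by simp [hXe])⟩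
  have key : ∀ x ∈ X, ∃ lam ∈ M, ∃ ε > (0:ℝ), ∀ y, dist y x < 2 * ε → y ∉ C lam := by
    intro x hx
    obtain ⟨lam, hlamM, hlamx⟩ := hnot x hx
    have hopen : IsOpen (C lam)ᶜ := (hCcomp lam).isClosed.isOpen_compl
    obtain ⟨r, hr, hball⟩ := Metric.isOpen_iff.mp hopen x hlamx
    refine ⟨lam, hlamM, r / 2, by linarith, fun y hy => hball ?_⟩
    exact Metric.mem_ball.mpr (by linarith)
  choose lam hlamM ε hε hprop using key
  obtain ⟨t, ht⟩ := hX.elim_nhds_subcover' (fun x hx => Metric.ball x (ε x hx))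
    (fun x hx => Metric.ball_mem_nhds x (hε x hx))
  have htne : t.Nonempty := by
    obtain ⟨x, hx⟩ := hXne
    obtain ⟨i, hi, _⟩ := Set.mem_iUnion₂.mp (ht hx)
    exact ⟨i, hi⟩
  set ρ := t.inf' htne (fun i => ε i.1 i.2) with hρ
  refine ⟨ρ, ?_, ?_⟩
  · exact (Finset.lt_inf'_iff htne).mpr fun i hi => hε i.1 i.2
  · intro x hx
    obtain ⟨i, hit, hxball⟩ := Set.mem_iUnion₂.mp (ht hx)
    refine ⟨lam i.1 i.2, hlamM i.1 i.2, fun x' _ hdist => hprop i.1 i.2 x' ?_⟩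
    have h1 : dist x i.1 < ε i.1 i.2 := Metric.mem_ball.mp hxball
    have h2 : ρ ≤ ε i.1 i.2 := Finset.inf'_le _ hit
    calc dist x' i.1 ≤ dist x' x + dist x i.1 := dist_triangle _ _ _
      _ < 2 * ε i.1 i.2 := by linarith
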